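/- arXiv:1703.03891 — 4 statements merged into one kernel-verified Lean document; each statement's English description precedes it below -/
import Mathlib

section
/- Let G be an additive commutative group and h, h' : G → ℝ two functions. Suppose there are constants c3, c4, c5, c6, c7, c8 > 0 such that c3·h'(x) − c4 ≤ h(x) ≤ c5·h'(x) + c6 for all x ∈ G, and h'(x₁ + x₂) ≤ c7·(h'(x₁) + h'(x₂)) + c8 for all x₁, x₂ ∈ G. Then for every ε > 0 there exist ε' > 0 and c9 ∈ ℝ, depending only on c3, …, c8 and ε, such that for every subset Σ ⊆ G one has the inclusion C(Σ, h', ε') ⊆ {x ∈ G : h'(x) < c9} ∪ C(Σ, h, ε). -/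
/-- The height cone `C(Σ, h, ε)` associated with a subset `Σ` of an additive
commutative group `G`, a function `h : G → ℝ`, and a real number `ε`. -/
def heightCone {G : Type*} [AddCommGroup G] (S : Set G) (h : G → ℝ) (ε : ℝ) : Set G :=
  {x : G | ∃ a ∈ S, ∃ b : G, x = a + b ∧ h b ≤ ε * (1 + h a)}

theorem heightCone_comparison {G : Type*} [AddCommGroup G] (h h' : G → ℝ)
    (c3 c4 c5 c6 c7 c8 : ℝ)
    (hc3 : 0 < c3) (hc4 : 0 < c4) (hc5 : 0 < c5) (hc6 : 0 < c6)
    (hc7 : 0 < c7) (hc8 : 0 < c8)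
    (hlow : ∀ x : G, c3 * h' x - c4 ≤ h x)
    (hup : ∀ x : G, h x ≤ c5 * h' x + c6)
    (hadd : ∀ x₁ x₂ : G, h' (x₁ + x₂) ≤ c7 * (h' x₁ + h' x₂) + c8)
    (ε : ℝ) (hε : 0 < ε) :
    ∃ ε' > 0, ∃ c9 : ℝ, ∀ S : Set G,
      heightCone S h' ε' ⊆ {x : G | h' x < c9} ∪ heightCone S h ε := by
  set ε' : ℝ := ε * c3 / (2 * c5) with hε'def
  have hε' : 0 < ε' := by positivity
  set K : ℝ := c5 * ε' + c6 + ε * c4 with hKdef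
  have hK : 0 < K := by positivity
  set T : ℝ := 2 * K / (ε * c3) with hTdef
  have hT : 0 < T := by positivity
  refine ⟨ε', hε', c7 * (T + ε' * (1 + T)) + c8 + 1, fun S x hx => ?_⟩
  obtain ⟨a, haS, b, hxab, hb⟩ := hx
  by_cases hcase : T ≤ h' a
  · right
    refine ⟨a, haS, b, hxab, ?_⟩
    have h1 : h b ≤ c5 * h' b + c6 := hup b
    have h2 : c3 * h' a - c4 ≤ h a := hlow a
    have h3 : c5 * h' b ≤ c5 * (ε' * (1 + h' a)) := by
      exact mul_le_mul_of_nonneg_left hb hc5.le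
    have hmul : ε * c3 / 2 * T = K := by
      field_simp [hTdef]
      rw [hTdef]; field_simp
    have h4 : K ≤ ε * c3 / 2 * h' a := by
      rw [← hmul]
      exact mul_le_mul_of_nonneg_left hcase (by positivity)
    have hc5e : c5 * ε' = ε * c3 / 2 := by
      field_simp [hε'def]
      rw [hε'def]; field_simp
    nlinarith [hε.le, h4]
  · left
    push_neg at hcase
    have hb' : h' b ≤ ε' * (1 + T) := by
      calc h' b ≤ ε' * (1 + h' a) := hb
        _ ≤ ε' * (1 + T) := by nlinarith
    have hx' : h' x ≤ c7 * (h' a + h' b) + c8 := by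
      rw [hxab]; exact hadd a b
    simp only [Set.mem_setOf_eq]
    nlinarith
end

section
/- Let K be a field, t, r, r' ∈ ℕ, and y : Fin t → (Fin r → K) a family of column vectors. Then: (i) there exist finitely many pairs (g₁, E₁), …, (g_N, E_N), where each g_k is a polynomial over K in variables indexed by Fin t ⊕ (Fin r × Fin r') and each E_k is a finite set of such polynomials, so that for all a : Fin t → K and all matrices M : Matrix (Fin r) (Fin r') K, the linear system ∑_{i} a_i • y_i = M·x has a solution x ∈ K^{r'} if and only if for some k the polynomial g_k does not vanish and every polynomial of E_k vanishes at the point whose coordinate at inl i is a_i and at inr (p,q) is the matrix entry M p q; and (ii) if the system ∑_i a_i • y_i = M·x has a solution, then for every c ∈ K the scaled system ∑_i (c·a_i) • y_i = (c•M)·x also has a solution. -/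
open Matrix

section Aux

variable {K : Type*} [Field K]

/-- Extract an independent subfamily with the same span. -/
lemma exists_emb_span {V ι : Type*} [AddCommGroup V] [Module K V]
    [Fintype ι] (v : ι → V) :
    ∃ (s : ℕ) (e : Fin s ↪ ι), LinearIndependent K (v ∘ e) ∧
      Submodule.span K (Set.range (v ∘ e)) = Submodule.span K (Set.range v) := by
  obtain ⟨b, hbsub, hspan, hind⟩ := exists_linearIndependent K (Set.range v)
  haveI : Fintype b := ((Set.finite_range v).subset hbsub).fintype
  set s := Fintype.card b with hs
  let eqv : Fin s ≃ b := (Fintype.equivFin b).symm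
  have hpre : ∀ x : b, ∃ i, v i = x := fun x => hbsub x.2
  choose idx hidx using hpre
  have hcomp : (v ∘ fun j => idx (eqv j)) = fun j => ((eqv j : V)) := by
    funext j; exact hidx (eqv j)
  refine ⟨s, ⟨fun j => idx (eqv j), ?_⟩, ?_, ?_⟩
  · intro j j' hjj'
    have h2 : v (idx (eqv j)) = v (idx (eqv j')) := by simpa using congrArg v hjj'
    have : (eqv j : V) = eqv j' := by rw [← hidx (eqv j), ← hidx (eqv j'), h2]
    exact eqv.injective (Subtype.ext this)
  · show LinearIndependent K (v ∘ fun j => idx (eqv j))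
    rw [hcomp]
    exact hind.comp eqv eqv.injective
  · show Submodule.span K (Set.range (v ∘ fun j => idx (eqv j))) = _
    rw [hcomp]
    have : Set.range (fun j => ((eqv j : V))) = b := by
      rw [show (fun j => ((eqv j : V))) = Subtype.val ∘ eqv from rfl, Set.range_comp,
        Equiv.range_eq_univ, Set.image_univ, Subtype.range_coe]
    rw [this, hspan]

/-- Determinant of a bordered matrix via the Schur complement. -/
lemma det_border {s : ℕ} (B : Matrix (Fin s) (Fin s) K) (u c : Fin s → K) (d : K)
    (hB : IsUnit B.det) :
    (Matrix.fromBlocks B (Matrix.of fun i (_ : Unit) => u i)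
      (Matrix.of fun (_ : Unit) j => c j) (Matrix.of fun (_ : Unit) (_ : Unit) => d)).det
      = B.det * (d - ∑ j, c j * (B⁻¹ *ᵥ u) j) := by
  haveI := B.invertibleOfIsUnitDet hB
  rw [Matrix.det_fromBlocks₁₁]
  congr 1
  rw [Matrix.det_unique]
  have : (⅟B) = B⁻¹ := invOf_eq_nonsing_inv B
  simp only [Matrix.sub_apply, Matrix.mul_apply, Matrix.of_apply, this,
    Matrix.mulVec, dotProduct]
  congr 1
  rw [Finset.sum_congr rfl (fun j _ => Finset.sum_mul (Finset.univ) _ (u j))]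
  rw [Finset.sum_comm]
  refine Finset.sum_congr rfl fun j _ => ?_
  rw [Finset.mul_sum]
  exact Finset.sum_congr rfl fun k _ => by ring

/-- Solvability of a linear system is equivalent to a bordered-minor condition. -/
lemma solvable_iff_minors {r r' : ℕ} (M : Matrix (Fin r) (Fin r') K) (b : Fin r → K) :
    (∃ x, M.mulVec x = b) ↔
    ∃ (s : ℕ) (f : Fin s ↪ Fin r) (h : Fin s ↪ Fin r'),
      (M.submatrix f h).det ≠ 0 ∧ ∀ p : Fin r,
        (Matrix.fromBlocks (M.submatrix f h) (Matrix.of fun i (_ : Unit) => b (f i))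
          (Matrix.of fun (_ : Unit) j => M p (h j))
          (Matrix.of fun (_ : Unit) (_ : Unit) => b p)).det = 0 := by
  constructor
  · rintro ⟨x, hx⟩
    -- choose independent spanning columns
    obtain ⟨n, h, hindC, hspanC⟩ := exists_emb_span (K := K) (Mᵀ)
    set N : Matrix (Fin r) (Fin n) K := M.submatrix id h with hN
    have hNT : Nᵀ = Mᵀ ∘ h := rfl
    -- choose independent spanning rows of N
    obtain ⟨m, f, hindR, hspanR⟩ := exists_emb_span (K := K) (N)
    -- m = n
    have hmn : m = n := by
      have h1 : Module.finrank K (Submodule.span K (Set.range (N ∘ f))) = m := by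
        rw [finrank_span_eq_card hindR, Fintype.card_fin]
      have h2 : Module.finrank K (Submodule.span K (Set.range (Nᵀ))) = n := by
        rw [hNT, finrank_span_eq_card hindC, Fintype.card_fin]
      have h3 : N.rank = Module.finrank K (Submodule.span K (Set.range N)) :=
        N.rank_eq_finrank_span_row
      have h4 : N.rank = Module.finrank K (Submodule.span K (Set.range Nᵀ)) :=
        N.rank_eq_finrank_span_cols
      rw [hspanR] at h1
      omega
    subst hmn
    -- the square submatrix is invertible
    have hrows : LinearIndependent K (fun i => (M.submatrix f h) i) := by
      have : (fun i => (M.submatrix f h) i) = N ∘ f := rfl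
      rw [this]; exact hindR
    have hunit : IsUnit (M.submatrix f h) := linearIndependent_rows_iff_isUnit.mp hrows
    have hdet : IsUnit (M.submatrix f h).det := (Matrix.isUnit_iff_isUnit_det _).mp hunit
    refine ⟨m, f, h, hdet.ne_zero, fun p => ?_⟩
    -- b is in the span of the chosen columns
    have hbmem : b ∈ LinearMap.range N.mulVecLin := by
      rw [Matrix.range_mulVecLin, show N.col = Nᵀ from rfl, hNT]
      rw [show Mᵀ ∘ h = Mᵀ ∘ (h : Fin m → Fin r') from rfl] at hspanC ⊢
      rw [hspanC, show Mᵀ = M.col from rfl, ← Matrix.range_mulVecLin]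
      exact ⟨x, hx⟩
    obtain ⟨x₀, hx₀⟩ := hbmem
    rw [Matrix.mulVecLin_apply] at hx₀
    rw [det_border _ _ _ _ hdet]
    have hBx : (M.submatrix f h) *ᵥ x₀ = fun i => b (f i) := by
      funext i
      have := congrFun hx₀ (f i)
      simpa [Matrix.mulVec, dotProduct, N, Matrix.submatrix] using this
    have hinv : (M.submatrix f h)⁻¹ *ᵥ (fun i => b (f i)) = x₀ := by
      rw [← hBx, Matrix.mulVec_mulVec, Matrix.nonsing_inv_mul _ hdet, Matrix.one_mulVec]
    have hsum : ∑ j, M p (h j) * ((M.submatrix f h)⁻¹ *ᵥ fun i => b (f i)) j = b p := by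
      rw [hinv, ← congrFun hx₀ p]
      simp [Matrix.mulVec, dotProduct, N, Matrix.submatrix]
    rw [hsum]
    simp
  · rintro ⟨s, f, h, hdet, hminor⟩
    haveI := (M.submatrix f h).invertibleOfIsUnitDet (isUnit_iff_ne_zero.mpr hdet)
    set x₀ : Fin s → K := (M.submatrix f h)⁻¹ *ᵥ (fun i => b (f i)) with hx₀
    refine ⟨fun q => ∑ j, if h j = q then x₀ j else 0, ?_⟩
    funext p
    have hm := hminor p
    rw [det_border _ _ _ _ (isUnit_iff_ne_zero.mpr hdet)] at hm
    have hz : b p - ∑ j, M p (h j) * x₀ j = 0 := by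
      rcases mul_eq_zero.mp hm with h' | h'
      · exact absurd h' hdet
      · exact h'
    have hbp : b p = ∑ j, M p (h j) * x₀ j := sub_eq_zero.mp hz
    rw [hbp]
    simp only [Matrix.mulVec, dotProduct, Finset.mul_sum, mul_ite, mul_zero]
    rw [Finset.sum_comm]
    refine Finset.sum_congr rfl fun j _ => ?_
    rw [Finset.sum_ite_eq Finset.univ (h j) (fun q => M p q * x₀ j)]
    simp

end Aux

theorem solvability_locus_is_cone {K : Type*} [Field K] {t r r' : ℕ}
    (y : Fin t → Fin r → K) :
    (∃ N : ℕ, ∃ g : Fin N → MvPolynomial (Fin t ⊕ Fin r × Fin r') K,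
      ∃ E : Fin N → Finset (MvPolynomial (Fin t ⊕ Fin r × Fin r') K),
      ∀ (a : Fin t → K) (M : Matrix (Fin r) (Fin r') K),
        (∃ x : Fin r' → K, M.mulVec x = ∑ i, a i • y i) ↔
          ∃ k : Fin N,
            MvPolynomial.eval (Sum.elim a (fun pq => M pq.1 pq.2)) (g k) ≠ 0 ∧
            ∀ e ∈ E k, MvPolynomial.eval (Sum.elim a (fun pq => M pq.1 pq.2)) e = 0) ∧
    (∀ (a : Fin t → K) (M : Matrix (Fin r) (Fin r') K) (c : K),
      (∃ x : Fin r' → K, M.mulVec x = ∑ i, a i • y i) →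
      (∃ x : Fin r' → K, (c • M).mulVec x = ∑ i, (c * a i) • y i)) := by
  classical
  constructor
  · let σ := (Fin t ⊕ Fin r × Fin r')
    let P : Fin r → Fin r' → MvPolynomial σ K := fun p q => MvPolynomial.X (Sum.inr (p, q))
    let bp : Fin r → MvPolynomial σ K := fun p =>
      ∑ i, MvPolynomial.X (Sum.inl i) * MvPolynomial.C (y i p)
    let D := Σ s : Fin (min r r' + 1), (Fin (s : ℕ) ↪ Fin r) × (Fin (s : ℕ) ↪ Fin r')
    let enum : Fin (Fintype.card D) ≃ D := (Fintype.equivFin D).symm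
    let gP : D → MvPolynomial σ K := fun d => (Matrix.of fun i j => P (d.2.1 i) (d.2.2 j)).det
    let mP : D → Fin r → MvPolynomial σ K := fun d p =>
      (Matrix.fromBlocks (Matrix.of fun i j => P (d.2.1 i) (d.2.2 j))
        (Matrix.of fun i (_ : Unit) => bp (d.2.1 i))
        (Matrix.of fun (_ : Unit) j => P p (d.2.2 j))
        (Matrix.of fun (_ : Unit) (_ : Unit) => bp p)).det
    refine ⟨Fintype.card D, fun k => gP (enum k),
      fun k => Finset.image (mP (enum k)) Finset.univ, fun a M => ?_⟩
    set v : σ → K := Sum.elim a (fun pq => M pq.1 pq.2) with hv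
    set φ := MvPolynomial.eval v with hφ
    set bv : Fin r → K := ∑ i, a i • y i with hbv
    have hbv' : ∀ p, bv p = ∑ i, a i * y i p := fun p => by
      simp [hbv, Finset.sum_apply]
    have hφP : ∀ p q, φ (P p q) = M p q := fun p q => by simp [P, hφ, hv]
    have hφb : ∀ p, φ (bp p) = bv p := fun p => by
      simp [bp, hφ, hv, hbv' p]
    have hg : ∀ d : D, φ (gP d) = (M.submatrix d.2.1 d.2.2).det := by
      intro d
      rw [show φ (gP d) = ((Matrix.of fun i j => P (d.2.1 i) (d.2.2 j)).map φ).det from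
        RingHom.map_det φ _]
      congr 1
      ext i j
      simp [Matrix.map_apply, hφP]
    have hm : ∀ (d : D) (p : Fin r), φ (mP d p) =
        (Matrix.fromBlocks (M.submatrix d.2.1 d.2.2)
          (Matrix.of fun i (_ : Unit) => bv (d.2.1 i))
          (Matrix.of fun (_ : Unit) j => M p (d.2.2 j))
          (Matrix.of fun (_ : Unit) (_ : Unit) => bv p)).det := by
      intro d p
      rw [show φ (mP d p) = ((Matrix.fromBlocks _ _ _ _).map φ).det from RingHom.map_det φ _,
        Matrix.fromBlocks_map]
      congr 1
      ext i j
      rcases i with i | i <;> rcases j with j | j <;>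
        simp [Matrix.map_apply, hφP, hφb]
    rw [show (∃ x : Fin r' → K, M.mulVec x = bv) ↔ _ from solvable_iff_minors M bv]
    constructor
    · rintro ⟨s, f, h, h1, h2⟩
      have hs1 : s ≤ r := by simpa using Fintype.card_le_of_embedding f
      have hs2 : s ≤ r' := by simpa using Fintype.card_le_of_embedding h
      let d : D := ⟨⟨s, by omega⟩, f, h⟩
      refine ⟨enum.symm d, ?_, ?_⟩
      · simp only [Equiv.apply_symm_apply, hg]; exact h1
      · intro e he
        simp only [Equiv.apply_symm_apply] at he
        obtain ⟨p, -, rfl⟩ := Finset.mem_image.mp he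
        rw [hm]; exact h2 p
    · rintro ⟨k, hk1, hk2⟩
      refine ⟨((enum k).1 : ℕ), (enum k).2.1, (enum k).2.2, ?_, fun p => ?_⟩
      · rw [← hg]; exact hk1
      · rw [← hm]
        exact hk2 _ (Finset.mem_image_of_mem _ (Finset.mem_univ p))
  · rintro a M c ⟨x, hx⟩
    refine ⟨x, ?_⟩
    rw [Matrix.smul_mulVec, hx, Finset.smul_sum]
    exact Finset.sum_congr rfl fun i _ => smul_smul c (a i) (y i)
end

section
/- Let U ⊆ ℂ be an open set, m ∈ ℕ, and for each u ∈ Fin m let κ_u : ℂ → ℂ be a function that is complex-differentiable on U with κ_u(z) ≠ 0 for every z ∈ U; let a : Fin m → ℝ. Define f(z) = ∏_{u} ‖κ_u(z)‖^{a_u} (real powers of the norms). Then for every z ∈ U, the Laplacian of the function w ↦ log(1 + f(w)) at z equals (f(z) / (1 + f(z))²) · ‖∑_{u} a_u · (κ_u'(z) / κ_u(z))‖², where κ_u' denotes the complex derivative of κ_u. -/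
/-- The (real) Laplacian of a function `g : ℂ → ℝ` at a point: the sum of its second
derivatives in the two real coordinate directions `1` and `I` of `ℂ ≅ ℝ²`. -/
noncomputable def laplacian (g : ℂ → ℝ) (z : ℂ) : ℝ :=
  fderiv ℝ (fun w => fderiv ℝ g w 1) z 1 +
    fderiv ℝ (fun w => fderiv ℝ g w Complex.I) z Complex.I

open Filter in
private lemma laplacian_congr {g₁ g₂ : ℂ → ℝ} {z : ℂ} (h : g₁ =ᶠ[nhds z] g₂) :
    laplacian g₁ z = laplacian g₂ z := by
  have h1 : (fun w => fderiv ℝ g₁ w 1) =ᶠ[nhds z] fun w => fderiv ℝ g₂ w 1 := by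
    filter_upwards [h.eventuallyEq_nhds] with w hw
    rw [hw.fderiv_eq]
  have h2 : (fun w => fderiv ℝ g₁ w Complex.I) =ᶠ[nhds z] fun w => fderiv ℝ g₂ w Complex.I := by
    filter_upwards [h.eventuallyEq_nhds] with w hw
    rw [hw.fderiv_eq]
  unfold laplacian
  rw [h1.fderiv_eq, h2.fderiv_eq]

private lemma laplacian_core {s : Set ℂ} (hs : IsOpen s) {G : ℂ → ℂ}
    (hG : DifferentiableOn ℂ G s) {z : ℂ} (hz : z ∈ s) :
    laplacian (fun w => Real.log (1 + Real.exp (G w).re)) z =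
      Real.exp (G z).re / (1 + Real.exp (G z).re) ^ 2 * ‖deriv G z‖ ^ 2 := by
  have hGd : ∀ w ∈ s, HasDerivAt G (deriv G w) w := fun w hw =>
    (hG.differentiableAt (hs.mem_nhds hw)).hasDerivAt
  have hre : ∀ w ∈ s, HasFDerivAt (fun w => (G w).re)
      (Complex.reCLM.comp (((1 : ℂ →L[ℂ] ℂ).smulRight (deriv G w)).restrictScalars ℝ)) w :=
    fun w hw => (Complex.reCLM.hasFDerivAt).comp w ((hGd w hw).hasFDerivAt.restrictScalars ℝ)
  have key : ∀ w ∈ s, HasFDerivAt (fun w => Real.log (1 + Real.exp (G w).re))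
      ((Real.exp (G w).re / (1 + Real.exp (G w).re)) •
        (Complex.reCLM.comp (((1 : ℂ →L[ℂ] ℂ).smulRight (deriv G w)).restrictScalars ℝ))) w := by
    intro w hw
    have hφ : HasDerivAt (fun t => Real.log (1 + Real.exp t))
        (Real.exp (G w).re / (1 + Real.exp (G w).re)) ((G w).re) := by
      have h := ((Real.hasDerivAt_exp ((G w).re)).const_add 1).log (by positivity)
      simpa using h
    exact hφ.comp_hasFDerivAt w (hre w hw)
  have e1 : (fun w => fderiv ℝ (fun w => Real.log (1 + Real.exp (G w).re)) w 1)
      =ᶠ[nhds z] fun w => Real.exp (G w).re / (1 + Real.exp (G w).re) * (deriv G w).re := by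
    filter_upwards [hs.mem_nhds hz] with w hw
    rw [(key w hw).fderiv]
    simp
  have eI : (fun w => fderiv ℝ (fun w => Real.log (1 + Real.exp (G w).re)) w Complex.I)
      =ᶠ[nhds z] fun w =>
        Real.exp (G w).re / (1 + Real.exp (G w).re) * (Complex.I * deriv G w).re := by
    filter_upwards [hs.mem_nhds hz] with w hw
    rw [(key w hw).fderiv]
    simp
  -- second derivatives
  have hA : AnalyticOnNhd ℂ (deriv G) s := (hG.analyticOnNhd hs).deriv
  have hd2 : HasDerivAt (deriv G) (deriv (deriv G) z) z := ((hA z hz).differentiableAt).hasDerivAt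
  have hφ' : HasDerivAt (fun t => Real.exp t / (1 + Real.exp t))
      (Real.exp (G z).re / (1 + Real.exp (G z).re) ^ 2) ((G z).re) := by
    have h0 : (1 : ℝ) + Real.exp (G z).re ≠ 0 := by positivity
    have h := (Real.hasDerivAt_exp ((G z).re)).fun_div
      ((Real.hasDerivAt_exp ((G z).re)).const_add 1) h0
    refine h.congr_deriv ?_
    ring
  have hP : HasFDerivAt (fun w => Real.exp (G w).re / (1 + Real.exp (G w).re))
      ((Real.exp (G z).re / (1 + Real.exp (G z).re) ^ 2) •
        (Complex.reCLM.comp (((1 : ℂ →L[ℂ] ℂ).smulRight (deriv G z)).restrictScalars ℝ))) z :=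
    by have h := hφ'.comp_hasFDerivAt z (hre z hz); exact h
  have hQ1 : HasFDerivAt (fun w => (deriv G w).re)
      (Complex.reCLM.comp (((1 : ℂ →L[ℂ] ℂ).smulRight (deriv (deriv G) z)).restrictScalars ℝ)) z :=
    (Complex.reCLM.hasFDerivAt).comp z (hd2.hasFDerivAt.restrictScalars ℝ)
  have hQI : HasFDerivAt (fun w => (Complex.I * deriv G w).re)
      (Complex.reCLM.comp
        (((1 : ℂ →L[ℂ] ℂ).smulRight (Complex.I * deriv (deriv G) z)).restrictScalars ℝ)) z :=
    (Complex.reCLM.hasFDerivAt).comp z ((hd2.const_mul Complex.I).hasFDerivAt.restrictScalars ℝ)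
  have hT1 := (hP.fun_mul hQ1).fderiv
  have hTI := (hP.fun_mul hQI).fderiv
  unfold laplacian
  rw [e1.fderiv_eq, eI.fderiv_eq, hT1, hTI]
  simp only [ContinuousLinearMap.add_apply, ContinuousLinearMap.coe_smul', Pi.smul_apply,
    ContinuousLinearMap.coe_comp', Function.comp_apply, ContinuousLinearMap.coe_restrictScalars',
    ContinuousLinearMap.smulRight_apply, ContinuousLinearMap.one_apply, one_smul, smul_eq_mul,
    Complex.reCLM_apply, Complex.smul_re]
  simp [Complex.sq_norm, Complex.normSq_apply]
  ring

theorem laplacian_log_one_add_prod_norm_rpow {U : Set ℂ} (hU : IsOpen U) {m : ℕ}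
    (κ : Fin m → ℂ → ℂ) (hκ : ∀ u, DifferentiableOn ℂ (κ u) U)
    (hκ0 : ∀ u, ∀ z ∈ U, κ u z ≠ 0) (a : Fin m → ℝ) :
    ∀ z ∈ U,
      laplacian (fun w => Real.log (1 + ∏ u, ‖κ u w‖ ^ a u)) z =
        (∏ u, ‖κ u z‖ ^ a u) / (1 + ∏ u, ‖κ u z‖ ^ a u) ^ 2 *
          ‖∑ u, (a u : ℂ) * (deriv (κ u) z / κ u z)‖ ^ 2 := by
  intro z hz
  classical
  have hev : ∀ᶠ w in nhds z, w ∈ U ∧ ∀ u, κ u w / κ u z ∈ Complex.slitPlane := by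
    have h1 : ∀ᶠ w in nhds z, w ∈ U := hU.eventually_mem hz
    have h2 : ∀ u, ∀ᶠ w in nhds z, κ u w / κ u z ∈ Complex.slitPlane := by
      intro u
      have hc : ContinuousAt (fun w => κ u w / κ u z) z :=
        (((hκ u).differentiableAt (hU.mem_nhds hz)).continuousAt).div_const _
      have hm : (fun w => κ u w / κ u z) z ∈ Complex.slitPlane := by
        simp only [div_self (hκ0 u z hz)]
        exact Complex.one_mem_slitPlane
      exact hc.eventually_mem (Complex.isOpen_slitPlane.mem_nhds hm)
    filter_upwards [h1, Filter.eventually_all.2 h2] with w hw1 hw2 using ⟨hw1, hw2⟩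
  obtain ⟨s, hss, hso, hzs⟩ := eventually_nhds_iff.mp hev
  have hne : ∀ w ∈ s, ∀ u, κ u w ≠ 0 := by
    intro w hw u h0
    have h := (hss w hw).2 u
    rw [h0, zero_div] at h
    simp [Complex.mem_slitPlane_iff] at h
  set G : ℂ → ℂ := fun w => ∑ u, (a u : ℂ) *
    (Complex.log (κ u w / κ u z) + (Real.log ‖κ u z‖ : ℂ)) with hGdef
  have hGdiff : DifferentiableOn ℂ G s := by
    intro w hw
    refine DifferentiableAt.differentiableWithinAt ?_
    refine DifferentiableAt.fun_sum fun u _ => ?_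
    refine DifferentiableAt.const_mul ?_ _
    refine DifferentiableAt.add_const _ ?_
    exact (((hκ u).differentiableAt (hU.mem_nhds (hss w hw).1)).div_const _).clog
      ((hss w hw).2 u)
  have hGre : ∀ w ∈ s, Real.exp ((G w).re) = ∏ u, ‖κ u w‖ ^ a u := by
    intro w hw
    have hre : (G w).re = ∑ u, a u * Real.log ‖κ u w‖ := by
      rw [hGdef]
      rw [Complex.re_sum]
      refine Finset.sum_congr rfl fun u _ => ?_
      have h1 : ((a u : ℂ) * (Complex.log (κ u w / κ u z) + (Real.log ‖κ u z‖ : ℂ))).re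
          = a u * ((Complex.log (κ u w / κ u z)).re + Real.log ‖κ u z‖) := by
        simp [Complex.mul_re, Complex.add_re, Complex.add_im]
      rw [h1, Complex.log_re]
      congr 1
      rw [norm_div]
      rw [Real.log_div (by simpa using hne w hw u) (by simpa using hκ0 u z hz)]
      simp [Complex.norm_def]
    rw [hre, Real.exp_sum]
    refine Finset.prod_congr rfl fun u _ => ?_
    rw [Real.rpow_def_of_pos (norm_pos_iff.2 (hne w hw u)), mul_comm]
  have hGz : deriv G z = ∑ u, (a u : ℂ) * (deriv (κ u) z / κ u z) := by
    have h : HasDerivAt G (∑ u, (a u : ℂ) * (deriv (κ u) z / κ u z)) z := by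
      rw [hGdef]
      refine HasDerivAt.fun_sum fun u _ => ?_
      have hk : HasDerivAt (κ u) (deriv (κ u) z) z :=
        ((hκ u).differentiableAt (hU.mem_nhds hz)).hasDerivAt
      have hq : HasDerivAt (fun w => κ u w / κ u z) (deriv (κ u) z / κ u z) z := hk.div_const _
      have hl := hq.clog ((hss z hzs).2 u)
      rw [div_self (hκ0 u z hz), div_one] at hl
      exact (hl.add_const _).const_mul _
    exact h.deriv
  have heq : (fun w => Real.log (1 + ∏ u, ‖κ u w‖ ^ a u)) =ᶠ[nhds z]
      (fun w => Real.log (1 + Real.exp (G w).re)) := by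
    filter_upwards [hso.mem_nhds hzs] with w hw
    rw [hGre w hw]
  rw [laplacian_congr heq, laplacian_core hso hGdiff hzs, hGre z hzs, hGz]
end

section
/- Let R be a commutative ring, let t, t', s be natural numbers with s ≤ t and t − s ≤ t', and let a : Fin t → Fin t' → R. In the multivariate polynomial ring over R with variables X_u (u ∈ Fin t) and Y_v (v ∈ Fin t'), consider the polynomial P = (∑_{u} X_u)^s · (∑_{v} Y_v)^{t−s} · ∏_{v ∈ Fin t'} (∑_{u} a_{u v}·X_u + Y_v). Then the coefficient in P of the squarefree top monomial ∏_{u ∈ Fin t} X_u · ∏_{v ∈ Fin t'} Y_v equals s!·(t−s)! · ∑_{S} ∑_{φ} ∏_{v ∈ S} a_{φ(v) v}, where S runs over all subsets of Fin t' of cardinality t − s and φ runs over all injective functions from S to Fin t. -/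
open MvPolynomial Finset

section Aux
variable {R : Type*} [CommRing R] {σ : Type*} [DecidableEq σ]

set_option linter.unusedSectionVars false

/-- The squarefree exponent supported on `S`. -/
noncomputable def indE (S : Finset σ) : σ →₀ ℕ := ∑ j ∈ S, Finsupp.single j 1

lemma indE_apply (S : Finset σ) (j : σ) : indE S j = if j ∈ S then 1 else 0 := by
  rw [indE, Finset.sum_apply']
  simp [Finsupp.single_apply]

lemma indE_support (S : Finset σ) : (indE S).support = S := by
  ext j; simp [Finsupp.mem_support_iff, indE_apply]

lemma indE_eq_zero {S : Finset σ} : indE S = 0 ↔ S = ∅ := by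
  constructor
  · intro h
    have := indE_support S
    rw [h] at this
    simpa using this.symm
  · rintro rfl; simp [indE]

lemma indE_sub_single {S : Finset σ} {j : σ} (hj : j ∈ S) :
    indE S - Finsupp.single j 1 = indE (S.erase j) := by
  ext i
  rcases eq_or_ne i j with rfl | h
  · simp [indE_apply, hj]
  · simp [indE_apply, Finsupp.single_apply, h, Ne.symm h]

lemma indE_le_indE {S T : Finset σ} (h : S ⊆ T) : indE S ≤ indE T := by
  intro j
  rcases Finset.decidableMem j S with hj | hj
  · simp [indE_apply, hj]
  · simp [indE_apply, hj, h hj]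

lemma indE_sdiff {S T : Finset σ} (h : T ⊆ S) : indE S - indE T = indE (S \ T) := by
  ext j
  by_cases hT : j ∈ T
  · simp [indE_apply, hT, h hT]
  · by_cases hS : j ∈ S <;> simp [indE_apply, hT, hS]

lemma coeff_mul_prod_X (T : Finset σ) :
    ∀ (p : MvPolynomial σ R) (S : Finset σ), T ⊆ S →
      coeff (indE S) (p * ∏ j ∈ T, X j) = coeff (indE (S \ T)) p := by
  induction T using Finset.cons_induction with
  | empty => intro p S _; simp
  | cons j T hj ih =>
    intro p S hTS
    have hjS : j ∈ S := hTS (Finset.mem_cons_self j T)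
    have hTS' : T ⊆ S.erase j := fun x hx =>
      Finset.mem_erase.mpr ⟨fun h => hj (h ▸ hx), hTS (Finset.mem_cons_of_mem hx)⟩
    rw [Finset.prod_cons, ← mul_left_comm, mul_comm (X j), coeff_mul_X',
      if_pos (by rw [indE_support]; exact hjS), indE_sub_single hjS, ih p (S.erase j) hTS']
    congr 2
    ext x
    simp only [Finset.mem_erase, Finset.mem_sdiff, Finset.mem_cons]
    tauto

lemma coeff_indE_sum_X_pow (T : Finset σ) :
    ∀ (k : ℕ) (S : Finset σ),
      coeff (indE S) ((∑ j ∈ T, X j : MvPolynomial σ R) ^ k) =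
        if S ⊆ T ∧ S.card = k then (k.factorial : R) else 0 := by
  intro k
  induction k with
  | zero =>
    intro S
    simp only [pow_zero, coeff_one, Nat.factorial_zero, Nat.cast_one]
    by_cases h : S = ∅
    · subst h
      rw [if_pos (indE_eq_zero.mpr rfl).symm, if_pos ⟨Finset.empty_subset T, Finset.card_empty⟩]
    · rw [if_neg (fun h0 => h (indE_eq_zero.mp h0.symm)),
        if_neg (fun hc => h (Finset.card_eq_zero.mp hc.2))]
  | succ k ih =>
    intro S
    rw [pow_succ, Finset.mul_sum, coeff_sum]
    have hterm : ∀ j ∈ T,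
        coeff (indE S) ((∑ j ∈ T, X j : MvPolynomial σ R) ^ k * X j) =
          if j ∈ S then
            (if S.erase j ⊆ T ∧ (S.erase j).card = k then (k.factorial : R) else 0)
          else 0 := by
      intro j _
      rw [coeff_mul_X', indE_support]
      by_cases hjS : j ∈ S
      · rw [if_pos hjS, if_pos hjS, indE_sub_single hjS, ih]
      · rw [if_neg hjS, if_neg hjS]
    rw [Finset.sum_congr rfl hterm]
    by_cases hST : S ⊆ T
    · by_cases hcard : S.card = k + 1
      · rw [if_pos ⟨hST, hcard⟩]
        have step : ∀ j ∈ T, (if j ∈ S then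
            (if S.erase j ⊆ T ∧ (S.erase j).card = k then (k.factorial : R) else 0)
            else 0) = if j ∈ S then (k.factorial : R) else 0 := by
          intro j _
          by_cases hjS : j ∈ S
          · rw [if_pos hjS, if_pos hjS, if_pos ⟨(Finset.erase_subset j S).trans hST,
              by rw [Finset.card_erase_of_mem hjS, hcard]; omega⟩]
          · rw [if_neg hjS, if_neg hjS]
        rw [Finset.sum_congr rfl step, Finset.sum_ite_mem,
          Finset.inter_eq_right.mpr hST, Finset.sum_const, nsmul_eq_mul, hcard]
        push_cast [Nat.factorial_succ]
        ring
      · rw [if_neg (fun h => hcard h.2)]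
        refine Finset.sum_eq_zero fun j _ => ?_
        by_cases hjS : j ∈ S
        · rw [if_pos hjS, if_neg]
          rintro ⟨-, hc⟩
          rw [Finset.card_erase_of_mem hjS] at hc
          have := Finset.card_pos.mpr ⟨j, hjS⟩
          omega
        · rw [if_neg hjS]
    · rw [if_neg (fun h => hST h.1)]
      obtain ⟨x, hxS, hxT⟩ := Finset.not_subset.mp hST
      refine Finset.sum_eq_zero fun j hjT => ?_
      by_cases hjS : j ∈ S
      · rw [if_pos hjS, if_neg]
        rintro ⟨hsub, -⟩
        exact hxT (hsub (Finset.mem_erase.mpr ⟨fun hxj => hxT (hxj ▸ hjT), hxS⟩))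
      · rw [if_neg hjS]

lemma coeff_mul_of_disjoint {A B : Finset σ} (hAB : Disjoint A B)
    {p q : MvPolynomial σ R}
    (hp : ∀ d ∈ p.support, (d : σ →₀ ℕ).support ⊆ A)
    (hq : ∀ d ∈ q.support, (d : σ →₀ ℕ).support ⊆ B)
    {da db : σ →₀ ℕ} (hda : da.support ⊆ A) (hdb : db.support ⊆ B) :
    coeff (da + db) (p * q) = coeff da p * coeff db q := by
  rw [coeff_mul]
  refine Finset.sum_eq_single_of_mem (da, db) (Finset.HasAntidiagonal.mem_antidiagonal.mpr rfl) ?_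
  rintro ⟨x, y⟩ hxy hne
  rw [Finset.HasAntidiagonal.mem_antidiagonal] at hxy
  by_contra hc
  have hx : coeff x p ≠ 0 := left_ne_zero_of_mul hc
  have hy : coeff y q ≠ 0 := right_ne_zero_of_mul hc
  have hxA : x.support ⊆ A := hp x (MvPolynomial.mem_support_iff.mpr hx)
  have hyB : y.support ⊆ B := hq y (MvPolynomial.mem_support_iff.mpr hy)
  have key : ∀ j, x j = da j ∧ y j = db j := by
    intro j
    have e : x j + y j = da j + db j := by
      have := DFunLike.congr_fun hxy j
      simpa using this
    by_cases hjA : j ∈ A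
    · have hjB : j ∉ B := Finset.disjoint_left.mp hAB hjA
      have h1 : y j = 0 := Finsupp.notMem_support_iff.mp fun h => hjB (hyB h)
      have h2 : db j = 0 := Finsupp.notMem_support_iff.mp fun h => hjB (hdb h)
      omega
    · have h1 : x j = 0 := Finsupp.notMem_support_iff.mp fun h => hjA (hxA h)
      have h2 : da j = 0 := Finsupp.notMem_support_iff.mp fun h => hjA (hda h)
      omega
  exact hne (Prod.ext (Finsupp.ext fun j => (key j).1) (Finsupp.ext fun j => (key j).2))

lemma mapDomain_indE {τ : Type*} [DecidableEq τ] {f : σ → τ} (hf : Function.Injective f)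
    (S : Finset σ) : Finsupp.mapDomain f (indE S) = indE (S.image f) := by
  rw [indE, Finsupp.mapDomain_finset_sum, indE, Finset.sum_image (fun a _ b _ h => hf h)]
  simp [Finsupp.mapDomain_single]

lemma rename_support_subset {τ : Type*} [DecidableEq τ] [Fintype σ] (f : σ → τ)
    (p : MvPolynomial σ R) :
    ∀ d ∈ (rename f p).support, (d : τ →₀ ℕ).support ⊆ Finset.univ.image f := by
  intro d hd
  obtain ⟨u, rfl, -⟩ := coeff_rename_ne_zero f p d (MvPolynomial.mem_support_iff.mp hd)
  exact Finsupp.mapDomain_support.trans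
    (Finset.image_subset_image (Finset.subset_univ _))

end Aux


lemma xpart {R : Type*} [CommRing R] {n s : ℕ} {ι : Type*} [Fintype ι] [DecidableEq ι]
    (b : ι → Fin n → R) (hcard : Fintype.card ι + s = n) :
    coeff (indE Finset.univ)
      (((∑ u : Fin n, X u) ^ s * ∏ i : ι, ∑ u : Fin n, C (b i u) * X u :
        MvPolynomial (Fin n) R)) =
      (s.factorial : R) * ∑ φ : ι ↪ Fin n, ∏ i : ι, b i (φ i) := by
  classical
  have hmono : ∀ g : ι → Fin n,
      ∏ i : ι, (C (b i (g i)) * X (g i)) =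
        C (∏ i : ι, b i (g i)) *
          monomial (∑ i : ι, Finsupp.single (g i) 1) (1 : R) := by
    intro g
    rw [Finset.prod_mul_distrib, monomial_sum_one]
    rw [map_prod (C : R →+* MvPolynomial (Fin n) R)]
    rfl
  rw [Finset.prod_univ_sum, Fintype.piFinset_univ, Finset.mul_sum, coeff_sum]
  have key : ∀ g : ι → Fin n,
      coeff (indE Finset.univ)
        ((∑ u : Fin n, X u) ^ s * ∏ i : ι, (C (b i (g i)) * X (g i))) =
      if Function.Injective g then (∏ i : ι, b i (g i)) * (s.factorial : R) else 0 := by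
    intro g
    rw [hmono g, mul_left_comm, coeff_C_mul, coeff_mul_monomial']
    by_cases hg : Function.Injective g
    · have hm : (∑ i : ι, Finsupp.single (g i) 1 : Fin n →₀ ℕ) =
          indE (Finset.univ.image g) := by
        rw [indE, Finset.sum_image (fun a _ c _ h => hg h)]
      rw [hm, if_pos (indE_le_indE (Finset.subset_univ _)), if_pos hg,
        indE_sdiff (Finset.subset_univ _)]
      have : coeff (indE (Finset.univ \ Finset.univ.image g))
          ((∑ u : Fin n, X u : MvPolynomial (Fin n) R) ^ s) = (s.factorial : R) := by
        rw [coeff_indE_sum_X_pow Finset.univ s, if_pos]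
        constructor
        · exact Finset.sdiff_subset
        · rw [Finset.card_sdiff_of_subset (Finset.subset_univ _),
            Finset.card_image_of_injective _ hg, Finset.card_univ, Finset.card_univ,
            Fintype.card_fin]
          omega
      rw [this, mul_one]
    · rw [if_neg, if_neg hg, mul_zero]
      intro hle
      rw [Function.not_injective_iff] at hg
      obtain ⟨i1, i2, hgg, hne⟩ := hg
      have h2 : 2 ≤ (∑ i : ι, Finsupp.single (g i) 1 : Fin n →₀ ℕ) (g i1) := by
        rw [Finset.sum_apply']
        have : (2 : ℕ) = ∑ i ∈ ({i1, i2} : Finset ι), Finsupp.single (g i) 1 (g i1) := by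
          rw [Finset.sum_pair hne]
          simp [Finsupp.single_apply, hgg]
        rw [this]
        exact Finset.sum_le_sum_of_subset (Finset.subset_univ _)
      have := hle (g i1)
      rw [indE_apply] at this
      simp only [Finset.mem_univ, if_true] at this
      omega
  rw [Finset.sum_congr rfl (fun g _ => key g), ← Finset.sum_filter,
    ← Finset.sum_subtype_eq_sum_filter, Finset.subtype_univ]
  rw [Fintype.sum_equiv (Equiv.subtypeInjectiveEquivEmbedding ι (Fin n))
    (fun x => (∏ i : ι, b i (x.1 i)) * (s.factorial : R))
    (fun φ : ι ↪ Fin n => (∏ i : ι, b i (φ i)) * (s.factorial : R)) (fun x => rfl)]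
  rw [← Finset.sum_mul, mul_comm]

open MvPolynomial in
theorem coeff_top_squarefree_monomial {R : Type*} [CommRing R] {t t' s : ℕ}
    (hs : s ≤ t) (hts : t - s ≤ t') (a : Fin t → Fin t' → R) :
    MvPolynomial.coeff (Finsupp.equivFunOnFinite.symm fun _ : Fin t ⊕ Fin t' => 1)
      (((∑ u : Fin t, X (Sum.inl u) : MvPolynomial (Fin t ⊕ Fin t') R) ^ s *
          (∑ v : Fin t', X (Sum.inr v)) ^ (t - s)) *
        ∏ v : Fin t', ((∑ u : Fin t, C (a u v) * X (Sum.inl u)) + X (Sum.inr v))) =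
      ((s.factorial : R) * ((t - s).factorial : R)) *
        ∑ S ∈ Finset.univ.filter (fun S : Finset (Fin t') => S.card = t - s),
          ∑ φ : (↥S) ↪ Fin t, ∏ v : ↥S, a (φ v) ↑v := by
  classical
  have hD : (Finsupp.equivFunOnFinite.symm fun _ : Fin t ⊕ Fin t' => 1) =
      indE (Finset.univ : Finset (Fin t ⊕ Fin t')) := by
    ext j
    simp [indE_apply]
  rw [hD, Finset.prod_add, Finset.powerset_univ, Finset.mul_sum, coeff_sum]
  -- left polynomial over `Fin t`, right polynomial over `Fin t'`
  set L : Finset (Fin t') → MvPolynomial (Fin t) R := fun S =>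
    (∑ u : Fin t, X u) ^ s * ∏ v ∈ S, ∑ u : Fin t, C (a u v) * X u with hL
  set Rp : MvPolynomial (Fin t') R := (∑ v : Fin t', X v) ^ (t - s) with hRp
  have hterm : ∀ S ∈ (Finset.univ : Finset (Finset (Fin t'))),
      coeff (indE Finset.univ)
        (((∑ u : Fin t, X (Sum.inl u) : MvPolynomial (Fin t ⊕ Fin t') R) ^ s *
            (∑ v : Fin t', X (Sum.inr v)) ^ (t - s)) *
          ((∏ v ∈ S, ∑ u : Fin t, C (a u v) * X (Sum.inl u)) *
            ∏ v ∈ Finset.univ \ S, X (Sum.inr v))) =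
      if S.card = t - s then
        coeff (indE Finset.univ) (L S) * ((t - s).factorial : R)
      else 0 := by
    intro S _
    have hrep :
        ((∑ u : Fin t, X (Sum.inl u) : MvPolynomial (Fin t ⊕ Fin t') R) ^ s *
            (∑ v : Fin t', X (Sum.inr v)) ^ (t - s)) *
          ((∏ v ∈ S, ∑ u : Fin t, C (a u v) * X (Sum.inl u)) *
            ∏ v ∈ Finset.univ \ S, X (Sum.inr v)) =
        (rename Sum.inl (L S) * rename Sum.inr Rp) *
          ∏ j ∈ (Finset.univ \ S).image Sum.inr, X j := by
      rw [Finset.prod_image (fun x _ y _ h => Sum.inr_injective h)]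
      simp only [hL, hRp, map_mul, map_pow, map_sum, map_prod, rename_X, rename_C]
      ring
    rw [hrep, coeff_mul_prod_X _ _ _ (Finset.subset_univ _)]
    have hsplit : indE (Finset.univ \ (Finset.univ \ S).image Sum.inr) =
        indE ((Finset.univ : Finset (Fin t)).image Sum.inl) +
          indE (S.image Sum.inr) := by
      ext j
      rw [Finsupp.add_apply]
      rcases j with u | v
      · simp [indE_apply]
      · by_cases hv : v ∈ S <;> simp [indE_apply, hv]
    have hdisj : Disjoint ((Finset.univ : Finset (Fin t)).image Sum.inl)
        ((Finset.univ : Finset (Fin t')).image Sum.inr) := by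
      rw [Finset.disjoint_left]
      rintro j hj1 hj2
      simp only [Finset.mem_image] at hj1 hj2
      obtain ⟨u, -, rfl⟩ := hj1
      obtain ⟨v, -, h⟩ := hj2
      exact Sum.inl_ne_inr h.symm
    rw [hsplit, coeff_mul_of_disjoint hdisj
      (rename_support_subset Sum.inl (L S)) (rename_support_subset Sum.inr Rp)
      (by rw [indE_support])
      (by rw [indE_support]; exact Finset.image_subset_image (Finset.subset_univ S))]
    rw [← mapDomain_indE Sum.inl_injective, ← mapDomain_indE Sum.inr_injective,
      coeff_rename_mapDomain _ Sum.inl_injective, coeff_rename_mapDomain _ Sum.inr_injective]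
    rw [hRp, coeff_indE_sum_X_pow]
    by_cases hcard : S.card = t - s
    · rw [if_pos ⟨Finset.subset_univ S, hcard⟩, if_pos hcard]
    · rw [if_neg (fun h => hcard h.2), if_neg hcard, mul_zero]
  rw [Finset.sum_congr rfl hterm, ← Finset.sum_filter, Finset.mul_sum]
  refine Finset.sum_congr rfl fun S hS => ?_
  have hScard : S.card = t - s := (Finset.mem_filter.mp hS).2
  have hLS : coeff (indE Finset.univ) (L S) =
      (s.factorial : R) * ∑ φ : (↥S) ↪ Fin t, ∏ v : ↥S, a (φ v) ↑v := by
    have hprod : (∏ v ∈ S, ∑ u : Fin t, C (a u v) * X u : MvPolynomial (Fin t) R) =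
        ∏ v : ↥S, ∑ u : Fin t, C (a u (↑v)) * X u := (Finset.prod_coe_sort S _).symm
    rw [hL]
    simp only [hprod]
    exact xpart (fun (v : ↥S) (u : Fin t) => a u ↑v)
      (by rw [Fintype.card_coe, hScard]; omega)
  rw [hLS]
  ring
end
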